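/- Let Ω ⊆ ℝ^N have finite measure and let p be a bounded variable exponent with p⁺ ≤ β p⁻ for some β > 1. Then for every 1 ≤ q ≤ p⁻ and every u ∈ L^{p(·)}(Ω), the classical L^q norm satisfies ‖u‖_q ≤ max{(ℒ^N(Ω))^{1/q − 1/p⁻}, (ℒ^N(Ω))^{β(1/q − 1/p⁺)}} · (1 + (q/p⁺)(β − 1))^{1/q} · ‖u‖_{p(·)}. In particular L^{p(·)}(Ω) embeds into L^q(Ω) for all 1 ≤ q ≤ p⁻. -/

import Mathlib

open MeasureTheory Filter

/-- The Luxemburg norm of `u` for a variable exponent `p` with respect to a measure `μ`. -/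
noncomputable def luxNorm {α : Type*} [MeasurableSpace α] (μ : Measure α) (p : α → ℝ)
    (u : α → ℝ) : ℝ :=
  sInf {l : ℝ | 0 < l ∧ ∫ x, (|u x| / l) ^ p x ∂μ ≤ 1}

lemma young_aux {t q r : ℝ} (ht : 0 ≤ t) (hq : 0 < q) (hqr : q ≤ r) :
    t ^ q ≤ q / r * t ^ r + (1 - q / r) := by
  have hr : 0 < r := hq.trans_le hqr
  have hw1 : (0:ℝ) ≤ q / r := by positivity
  have hw2 : (0:ℝ) ≤ 1 - q / r := by
    have : q / r ≤ 1 := (div_le_one hr).2 hqr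
    linarith
  have h := Real.geom_mean_le_arith_mean2_weighted hw1 hw2
    (Real.rpow_nonneg ht r) zero_le_one (by ring)
  rw [Real.one_rpow, mul_one, mul_one, ← Real.rpow_mul ht,
    mul_div_cancel₀ _ hr.ne'] at h
  exact h

lemma rpow_le_max_aux {c t a b : ℝ} (hc : 0 < c) (hat : a ≤ t) (htb : t ≤ b) :
    c ^ t ≤ max (c ^ a) (c ^ b) := by
  rcases le_total c 1 with h | h
  · exact le_max_of_le_left (Real.rpow_le_rpow_of_exponent_ge hc h hat)
  · exact le_max_of_le_right (Real.rpow_le_rpow_of_exponent_le h htb)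

lemma measurable_rpow_aux : Measurable fun pr : ℝ × ℝ => pr.1 ^ pr.2 := by
  have h : ∀ pr : ℝ × ℝ, pr.1 ^ pr.2 =
      if pr.1 = 0 then (if pr.2 = 0 then (1:ℝ) else 0)
      else Real.exp (Real.log pr.1 * pr.2) *
        (if pr.1 < 0 then Real.cos (pr.2 * Real.pi) else 1) := by
    rintro ⟨x, y⟩
    dsimp only
    rcases lt_trichotomy x 0 with hx | hx | hx
    · rw [if_neg hx.ne, if_pos hx, Real.rpow_def_of_neg hx]
    · subst hx
      rcases eq_or_ne y 0 with hy | hy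
      · simp [hy]
      · simp [hy, Real.zero_rpow hy]
    · rw [if_neg hx.ne', if_neg (not_lt.2 hx.le), mul_one, Real.rpow_def_of_pos hx]
  simp_rw [h]
  apply Measurable.ite
  · exact measurable_fst (measurableSet_singleton 0)
  · apply Measurable.ite
    · exact measurable_snd (measurableSet_singleton 0)
    · exact measurable_const
    · exact measurable_const
  · apply Measurable.mul
    · exact Real.measurable_exp.comp
        ((Real.measurable_log.comp measurable_fst).mul measurable_snd)
    · apply Measurable.ite
      · exact measurable_fst measurableSet_Iio
      · exact Real.measurable_cos.comp (measurable_snd.mul measurable_const)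
      · exact measurable_const

lemma Measurable.rpow' {α} [MeasurableSpace α] {f g : α → ℝ} (hf : Measurable f)
    (hg : Measurable g) : Measurable fun x => f x ^ g x :=
  measurable_rpow_aux.comp (hf.prodMk hg)

/-- if `p⁺ ≤ β p⁻` then for `1 ≤ q ≤ p⁻`, `u ∈ L^{p(·)}` lies in `L^q` and
`‖u‖_q ≤ max{ℒ(Ω)^{1/q−1/p⁻}, ℒ(Ω)^{β(1/q−1/p⁺)}} (1 + (q/p⁺)(β−1))^{1/q} ‖u‖_{p(·)}`. -/
theorem stmt3 {N : ℕ} (Ω : Set (Fin N → ℝ)) (hΩm : MeasurableSet Ω)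
    (hΩfin : volume Ω < ⊤)
    (p : (Fin N → ℝ) → ℝ) (hpmeas : Measurable p)
    (hp1 : ∀ᵐ x ∂(volume.restrict Ω), 1 ≤ p x)
    (B : ℝ) (hpB : ∀ᵐ x ∂(volume.restrict Ω), p x ≤ B)
    (β : ℝ) (hβ : 1 < β)
    (hpβ : essSup p (volume.restrict Ω) ≤ β * essInf p (volume.restrict Ω))
    (u : (Fin N → ℝ) → ℝ) (hu : Measurable u)
    (huLp : Integrable (fun x => |u x| ^ p x) (volume.restrict Ω))
    (q : ℝ) (hq1 : 1 ≤ q) (hq : q ≤ essInf p (volume.restrict Ω)) :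
    Integrable (fun x => |u x| ^ q) (volume.restrict Ω) ∧
    (∫ x in Ω, |u x| ^ q) ^ (1 / q)
      ≤ max ((volume Ω).toReal ^ (1 / q - 1 / essInf p (volume.restrict Ω)))
            ((volume Ω).toReal ^ (β * (1 / q - 1 / essSup p (volume.restrict Ω))))
        * (1 + q / essSup p (volume.restrict Ω) * (β - 1)) ^ (1 / q)
        * luxNorm (volume.restrict Ω) p u := by
  have hq0 : (0:ℝ) < q := lt_of_lt_of_le one_pos hq1
  set μ := volume.restrict Ω with hμdef
  by_cases hμ0 : volume Ω = 0
  · have hμz : μ = 0 := by rw [hμdef, Measure.restrict_eq_zero]; exact hμ0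
    constructor
    · rw [hμz]; exact integrable_zero_measure
    · have h1 : (∫ x, |u x| ^ q ∂μ) = 0 := by rw [hμz]; simp
      rw [h1, Real.zero_rpow (by positivity : 1/q ≠ 0)]
      have hlux : luxNorm μ p u = 0 := by
        unfold luxNorm
        have : {l : ℝ | 0 < l ∧ ∫ x, (|u x| / l) ^ p x ∂μ ≤ 1} = Set.Ioi 0 := by
          rw [hμz]; ext l; simp
        rw [this, csInf_Ioi]
      rw [hlux, mul_zero]
  -- main case
  have hμne : μ ≠ 0 := by
    rw [hμdef, Ne, Measure.restrict_eq_zero]; exact hμ0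
  have : NeBot (ae μ) := ae_neBot.2 hμne
  have hfin : IsFiniteMeasure μ := ⟨by rw [hμdef, Measure.restrict_apply_univ]; exact hΩfin⟩
  set L := (volume Ω).toReal with hLdef
  have hL0 : 0 < L := ENNReal.toReal_pos hμ0 hΩfin.ne
  set pm := essInf p μ with hpmdef
  set pM := essSup p μ with hpMdef
  have hbub : IsBoundedUnder (· ≤ ·) (ae μ) p := ⟨B, by simpa [eventually_map] using hpB⟩
  have hbdb : IsBoundedUnder (· ≥ ·) (ae μ) p := ⟨1, by simpa [eventually_map] using hp1⟩
  have h1pm : 1 ≤ pm :=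
    le_liminf_of_le hbub.isCoboundedUnder_ge (by simpa [eventually_map] using hp1)
  have hpmle : ∀ᵐ x ∂μ, pm ≤ p x := ae_essInf_le hbdb
  have hplepM : ∀ᵐ x ∂μ, p x ≤ pM := ae_le_essSup hbub
  have hpm0 : 0 < pm := lt_of_lt_of_le one_pos h1pm
  have hpmpM : pm ≤ pM := by
    obtain ⟨x, h1, h2⟩ := (hpmle.and hplepM).exists
    exact h1.trans h2
  have hpM0 : 0 < pM := lt_of_lt_of_le hpm0 hpmpM
  have hqpm : q ≤ pm := hq
  have hqpM : q ≤ pM := hqpm.trans hpmpM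
  have hqp : ∀ᵐ x ∂μ, q ≤ p x := hpmle.mono fun x hx => hqpm.trans hx
  -- integrability of (|u|/l)^p for any l > 0
  have hmeas_l : ∀ l : ℝ, AEStronglyMeasurable (fun x => (|u x| / l) ^ p x) μ :=
    fun l => ((hu.abs.div_const l).rpow' hpmeas).aestronglyMeasurable
  have hIlp : ∀ l : ℝ, 0 < l → Integrable (fun x => (|u x| / l) ^ p x) μ := by
    intro l hl
    refine (huLp.const_mul (max (l⁻¹ ^ (1:ℝ)) (l⁻¹ ^ B))).mono' (hmeas_l l) ?_
    filter_upwards [hp1, hpB] with x h1 hB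
    have hb0 : (0:ℝ) ≤ |u x| / l := div_nonneg (abs_nonneg _) hl.le
    rw [Real.norm_of_nonneg (Real.rpow_nonneg hb0 _), div_eq_mul_inv,
      Real.mul_rpow (abs_nonneg _) (inv_nonneg.2 hl.le), mul_comm]
    exact mul_le_mul_of_nonneg_right (rpow_le_max_aux (inv_pos.2 hl) h1 hB)
      (Real.rpow_nonneg (abs_nonneg _) _)
  -- integrability of |u|^q
  have hIq : Integrable (fun x => |u x| ^ q) μ := by
    refine ((integrable_const (1:ℝ)).add huLp).mono'
      ((hu.abs.rpow' measurable_const).aestronglyMeasurable) ?_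
    filter_upwards [hqp] with x hx
    simp only [Pi.add_apply]
    rw [Real.norm_of_nonneg (Real.rpow_nonneg (abs_nonneg _) _)]
    rcases le_total (|u x|) 1 with h | h
    · have h1 : |u x| ^ q ≤ 1 := Real.rpow_le_one (abs_nonneg _) h hq0.le
      have h2 : (0:ℝ) ≤ |u x| ^ p x := Real.rpow_nonneg (abs_nonneg _) _
      linarith
    · have h1 : |u x| ^ q ≤ |u x| ^ p x := Real.rpow_le_rpow_of_exponent_le h hx
      linarith
  refine ⟨hIq, ?_⟩
  -- definitions
  set S := {l : ℝ | 0 < l ∧ ∫ x, (|u x| / l) ^ p x ∂μ ≤ 1} with hSdef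
  set K := 1 + q / pM * (β - 1) with hKdef
  set M := max (L ^ (1/q - 1/pm)) (L ^ (β * (1/q - 1/pM))) with hMdef
  have hK1 : 1 ≤ K := by
    have h1 : 0 ≤ q / pM * (β - 1) :=
      mul_nonneg (div_nonneg hq0.le hpM0.le) (by linarith)
    rw [hKdef]; linarith
  have hK0 : (0:ℝ) < K := lt_of_lt_of_le one_pos hK1
  have hM0 : (0:ℝ) < M :=
    lt_max_of_lt_left (Real.rpow_pos_of_pos hL0 _)
  -- nonemptiness of S
  have hInt_nonneg : 0 ≤ ∫ x, |u x| ^ p x ∂μ :=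
    integral_nonneg fun x => Real.rpow_nonneg (abs_nonneg _) _
  have hSne : S.Nonempty := by
    set l₀ := max 1 ((∫ x, |u x| ^ p x ∂μ) + 1) with hl₀def
    have hl₀1 : 1 ≤ l₀ := le_max_left _ _
    have hl₀0 : 0 < l₀ := lt_of_lt_of_le one_pos hl₀1
    refine ⟨l₀, hl₀0, ?_⟩
    have hb : ∀ᵐ x ∂μ, (|u x| / l₀) ^ p x ≤ l₀⁻¹ * |u x| ^ p x := by
      filter_upwards [hp1] with x h1
      rw [div_eq_mul_inv, Real.mul_rpow (abs_nonneg _) (inv_nonneg.2 hl₀0.le), mul_comm]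
      refine mul_le_mul_of_nonneg_right ?_ (Real.rpow_nonneg (abs_nonneg _) _)
      calc l₀⁻¹ ^ p x ≤ l₀⁻¹ ^ (1:ℝ) :=
            Real.rpow_le_rpow_of_exponent_ge (inv_pos.2 hl₀0)
              (inv_le_one_of_one_le₀ hl₀1) h1
        _ = l₀⁻¹ := Real.rpow_one _
    calc (∫ x, (|u x| / l₀) ^ p x ∂μ) ≤ ∫ x, l₀⁻¹ * |u x| ^ p x ∂μ :=
          integral_mono_ae (hIlp l₀ hl₀0) (huLp.const_mul _) hb
      _ = l₀⁻¹ * ∫ x, |u x| ^ p x ∂μ := integral_const_mul _ _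
      _ ≤ l₀⁻¹ * l₀ := by
          refine mul_le_mul_of_nonneg_left ?_ (inv_nonneg.2 hl₀0.le)
          have := le_max_right (1:ℝ) ((∫ x, |u x| ^ p x ∂μ) + 1)
          linarith
      _ = 1 := inv_mul_cancel₀ hl₀0.ne'
  -- core estimate
  have core : ∀ l ∈ S, (∫ x, |u x| ^ q ∂μ) ^ (1/q) ≤ l * (M * K ^ (1/q)) := by
    rintro l ⟨hl0, hint⟩
    -- the generic step
    have step : ∀ s pc : ℝ, 0 < s → 0 < pc →
        (∀ᵐ x ∂μ, s ^ (q - p x) ≤ s ^ (q - pc)) →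
        (∫ x, (|u x| / l) ^ q ∂μ) ≤ q / pm * s ^ (q - pc) + s ^ q * (1 - q / pM) * L := by
      intro s pc hs0 hpc0 hsae
      have hpw : ∀ᵐ x ∂μ, (|u x| / l) ^ q ≤
          q / pm * s ^ (q - pc) * (|u x| / l) ^ p x + s ^ q * (1 - q / pM) := by
        filter_upwards [hp1, hqp, hpmle, hplepM, hsae] with x h1 hqx hmx hMx hsx
        have hpx0 : 0 < p x := lt_of_lt_of_le one_pos h1
        have ht0 : (0:ℝ) ≤ |u x| / l := div_nonneg (abs_nonneg _) hl0.le
        have hy := young_aux (t := (|u x| / l) / s) (div_nonneg ht0 hs0.le) hq0 hqx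
        have hsq0 : (0:ℝ) < s ^ q := Real.rpow_pos_of_pos hs0 _
        calc (|u x| / l) ^ q = s ^ q * (((|u x| / l) / s) ^ q) := by
              rw [Real.div_rpow ht0 hs0.le, mul_div_cancel₀ _ hsq0.ne']
          _ ≤ s ^ q * (q / p x * ((|u x| / l) / s) ^ p x + (1 - q / p x)) :=
              mul_le_mul_of_nonneg_left hy hsq0.le
          _ = q / p x * (s ^ (q - p x) * (|u x| / l) ^ p x) + s ^ q * (1 - q / p x) := by
              rw [Real.div_rpow ht0 hs0.le, Real.rpow_sub hs0]
              field_simp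
          _ ≤ q / pm * (s ^ (q - pc) * (|u x| / l) ^ p x) + s ^ q * (1 - q / pM) := by
              refine add_le_add ?_ ?_
              · refine mul_le_mul ?_ ?_ ?_ ?_
                · exact div_le_div_of_nonneg_left hq0.le hpm0 hmx
                · exact mul_le_mul_of_nonneg_right hsx (Real.rpow_nonneg ht0 _)
                · positivity
                · positivity
              · refine mul_le_mul_of_nonneg_left ?_ hsq0.le
                have : q / pM ≤ q / p x := div_le_div_of_nonneg_left hq0.le hpx0 hMx
                linarith
          _ = q / pm * s ^ (q - pc) * (|u x| / l) ^ p x + s ^ q * (1 - q / pM) := by ring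
      have hIlq : Integrable (fun x => (|u x| / l) ^ q) μ := by
        refine (Integrable.div_const hIq (l ^ q)).congr (ae_of_all _ fun x => ?_)
        exact (Real.div_rpow (abs_nonneg _) hl0.le q).symm
      calc (∫ x, (|u x| / l) ^ q ∂μ)
          ≤ ∫ x, (q / pm * s ^ (q - pc) * (|u x| / l) ^ p x + s ^ q * (1 - q / pM)) ∂μ :=
            integral_mono_ae hIlq (((hIlp l hl0).const_mul _).add (integrable_const _)) hpw
        _ = q / pm * s ^ (q - pc) * (∫ x, (|u x| / l) ^ p x ∂μ) + s ^ q * (1 - q / pM) * L := by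
            rw [integral_add ((hIlp l hl0).const_mul _) (integrable_const _),
              integral_const_mul, integral_const]
            rw [hμdef, measureReal_restrict_apply_univ]
            simp [hLdef, mul_comm, measureReal_def]
        _ ≤ q / pm * s ^ (q - pc) * 1 + s ^ q * (1 - q / pM) * L := by
            refine add_le_add_left (mul_le_mul_of_nonneg_left hint ?_) _
            have : (0:ℝ) ≤ s ^ (q - pc) := (Real.rpow_pos_of_pos hs0 _).le
            positivity
        _ = q / pm * s ^ (q - pc) + s ^ q * (1 - q / pM) * L := by ring
    -- choose s, pc depending on size of L
    have hqβ : q / pm + 1 - q / pM ≤ K := by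
      have h1 : q / pm ≤ q * β / pM := by
        rw [div_le_div_iff₀ hpm0 hpM0]
        nlinarith
      have h2 : q * β / pM - q / pM = q / pM * (β - 1) := by ring
      rw [hKdef]; linarith
    have main : ∃ pc : ℝ, 0 < pc ∧ q ≤ pc ∧ L ^ (1/q - 1/pc) ≤ M ∧
        (∫ x, (|u x| / l) ^ q ∂μ) ≤ L ^ (1 - q / pc) * K := by
      by_cases hL1 : 1 ≤ L
      · refine ⟨pM, hpM0, hqpM, ?_, ?_⟩
        · refine le_trans (Real.rpow_le_rpow_of_exponent_le hL1 ?_) (le_max_right _ _)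
          have h1 : 1 / pM ≤ 1 / q := one_div_le_one_div_of_le hq0 hqpM
          nlinarith
        · have hs0 : (0:ℝ) < L ^ (-(1/pM)) := Real.rpow_pos_of_pos hL0 _
          have hs1 : L ^ (-(1/pM)) ≤ 1 :=
            Real.rpow_le_one_of_one_le_of_nonpos hL1 (neg_nonpos.2 (by positivity))
          have hsae : ∀ᵐ x ∂μ, (L ^ (-(1/pM))) ^ (q - p x) ≤ (L ^ (-(1/pM))) ^ (q - pM) := by
            filter_upwards [hplepM] with x hx
            exact Real.rpow_le_rpow_of_exponent_ge hs0 hs1 (by linarith)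
          have h := step (L ^ (-(1/pM))) pM hs0 hpM0 hsae
          have e1 : (L ^ (-(1/pM))) ^ (q - pM) = L ^ (1 - q / pM) := by
            rw [← Real.rpow_mul hL0.le]
            congr 1
            field_simp
            try ring
          have e2 : (L ^ (-(1/pM))) ^ q * L = L ^ (1 - q / pM) := by
            rw [← Real.rpow_mul hL0.le]
            nth_rewrite 2 [show L = L ^ (1:ℝ) by rw [Real.rpow_one]]
            rw [← Real.rpow_add hL0]
            congr 1
            field_simp
            try ring
          rw [e1] at h
          calc (∫ x, (|u x| / l) ^ q ∂μ)
              ≤ q / pm * L ^ (1 - q / pM) + (L ^ (-(1/pM))) ^ q * (1 - q / pM) * L := h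
            _ = L ^ (1 - q / pM) * (q / pm + 1 - q / pM) := by
                rw [show (L ^ (-(1/pM))) ^ q * (1 - q / pM) * L
                    = (L ^ (-(1/pM))) ^ q * L * (1 - q / pM) by ring, e2]
                ring
            _ ≤ L ^ (1 - q / pM) * K := by
                refine mul_le_mul_of_nonneg_left hqβ (Real.rpow_pos_of_pos hL0 _).le
      · push_neg at hL1
        refine ⟨pm, hpm0, hqpm, le_max_left _ _, ?_⟩
        have hs0 : (0:ℝ) < L ^ (-(1/pm)) := Real.rpow_pos_of_pos hL0 _
        have hs1 : (1:ℝ) ≤ L ^ (-(1/pm)) :=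
          Real.one_le_rpow_of_pos_of_le_one_of_nonpos hL0 hL1.le (neg_nonpos.2 (by positivity))
        have hsae : ∀ᵐ x ∂μ, (L ^ (-(1/pm))) ^ (q - p x) ≤ (L ^ (-(1/pm))) ^ (q - pm) := by
          filter_upwards [hpmle] with x hx
          exact Real.rpow_le_rpow_of_exponent_le hs1 (by linarith)
        have h := step (L ^ (-(1/pm))) pm hs0 hpm0 hsae
        have e1 : (L ^ (-(1/pm))) ^ (q - pm) = L ^ (1 - q / pm) := by
          rw [← Real.rpow_mul hL0.le]
          congr 1
          field_simp
          try ring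
        have e2 : (L ^ (-(1/pm))) ^ q * L = L ^ (1 - q / pm) := by
          rw [← Real.rpow_mul hL0.le]
          nth_rewrite 2 [show L = L ^ (1:ℝ) by rw [Real.rpow_one]]
          rw [← Real.rpow_add hL0]
          congr 1
          field_simp
          try ring
        rw [e1] at h
        calc (∫ x, (|u x| / l) ^ q ∂μ)
            ≤ q / pm * L ^ (1 - q / pm) + (L ^ (-(1/pm))) ^ q * (1 - q / pM) * L := h
          _ = L ^ (1 - q / pm) * (q / pm + 1 - q / pM) := by
              rw [show (L ^ (-(1/pm))) ^ q * (1 - q / pM) * L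
                  = (L ^ (-(1/pm))) ^ q * L * (1 - q / pM) by ring, e2]
              ring
          _ ≤ L ^ (1 - q / pm) * K := by
              refine mul_le_mul_of_nonneg_left hqβ (Real.rpow_pos_of_pos hL0 _).le
    obtain ⟨pc, hpc0, hqpc, hLM, hbound⟩ := main
    have heq : (∫ x, (|u x| / l) ^ q ∂μ) = (∫ x, |u x| ^ q ∂μ) / l ^ q := by
      simp_rw [Real.div_rpow (abs_nonneg (u _)) hl0.le]
      exact integral_div _ _
    have hlq0 : (0:ℝ) < l ^ q := Real.rpow_pos_of_pos hl0 _
    have hmain2 : (∫ x, |u x| ^ q ∂μ) ≤ l ^ q * (L ^ (1 - q / pc) * K) := by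
      rw [heq, div_le_iff₀ hlq0] at hbound
      calc (∫ x, |u x| ^ q ∂μ) ≤ L ^ (1 - q / pc) * K * l ^ q := hbound
        _ = l ^ q * (L ^ (1 - q / pc) * K) := by ring
    have hInonneg : 0 ≤ ∫ x, |u x| ^ q ∂μ :=
      integral_nonneg fun x => Real.rpow_nonneg (abs_nonneg _) _
    calc (∫ x, |u x| ^ q ∂μ) ^ (1/q)
        ≤ (l ^ q * (L ^ (1 - q / pc) * K)) ^ (1/q) :=
          Real.rpow_le_rpow hInonneg hmain2 (by positivity)
      _ = l * (L ^ (1/q - 1/pc) * K ^ (1/q)) := by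
          rw [Real.mul_rpow hlq0.le (by positivity),
            Real.mul_rpow (Real.rpow_pos_of_pos hL0 _).le hK0.le,
            ← Real.rpow_mul hl0.le, mul_one_div_cancel hq0.ne', Real.rpow_one,
            ← Real.rpow_mul hL0.le]
          congr 2
          field_simp
      _ ≤ l * (M * K ^ (1/q)) := by
          refine mul_le_mul_of_nonneg_left ?_ hl0.le
          exact mul_le_mul_of_nonneg_right hLM (Real.rpow_pos_of_pos hK0 _).le
  -- final assembly
  have hMK0 : (0:ℝ) < M * K ^ (1/q) := mul_pos hM0 (Real.rpow_pos_of_pos hK0 _)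
  have hlux : luxNorm μ p u = sInf S := rfl
  have hInonneg : 0 ≤ ∫ x, |u x| ^ q ∂μ :=
    integral_nonneg fun x => Real.rpow_nonneg (abs_nonneg _) _
  have hle : (∫ x, |u x| ^ q ∂μ) ^ (1/q) / (M * K ^ (1/q)) ≤ sInf S := by
    refine le_csInf hSne fun l hl => ?_
    rw [div_le_iff₀ hMK0]
    exact core l hl
  rw [hlux]
  calc (∫ x, |u x| ^ q ∂μ) ^ (1/q) ≤ sInf S * (M * K ^ (1/q)) := (div_le_iff₀ hMK0).1 hle
    _ = M * K ^ (1/q) * sInf S := by ring
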